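/- arXiv:2104.09450 — 4 statements merged into one kernel-verified Lean document; each statement's English description precedes it below -/
import Mathlib

section
/- Let λ ∈ ℂ with |λ| > 1, let G = diag(λ, λ⁻¹), and let S = [[a, b], [c, d]] and N = [[a′, b′], [c′, d′]] be 2×2 complex matrices with det S = det N = 1 and b·c′ ≠ 0. For each natural number n let r_n denote the spectral radius of the matrix M_n = S · G⁻ⁿ · N · Gⁿ. Then r_n / |λ|^(2n) converges to |b·c′| as n → ∞. -/
open Matrix Filter

/-- The spectral radius of a 2×2 complex matrix: the maximum of `|μ|` over the
elements `μ` of its spectrum (equivalently, the roots of its characteristic polynomial). -/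
noncomputable def specRad (M : Matrix (Fin 2) (Fin 2) ℂ) : ℝ :=
  (spectralRadius ℂ M).toReal

lemma exists_root_quadratic (t : ℂ) :
    ∃ μ : ℂ, μ ≠ 0 ∧ μ + μ⁻¹ = t ∧ 1 ≤ ‖μ‖ := by
  obtain ⟨s, hs⟩ : ∃ s : ℂ, s ^ 2 = t ^ 2 - 4 :=
    IsAlgClosed.exists_pow_nat_eq (t ^ 2 - 4) two_pos
  set μ₀ : ℂ := (t + s) / 2 with hμ₀
  have key : μ₀ ^ 2 - t * μ₀ + 1 = 0 := by
    field_simp [hμ₀]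
    linear_combination (1/4)*hs
  have h0 : μ₀ ≠ 0 := by
    intro h; rw [h] at key; norm_num at key
  have hsum : μ₀ + μ₀⁻¹ = t := by
    field_simp
    linear_combination key
  by_cases h1 : 1 ≤ ‖μ₀‖
  · exact ⟨μ₀, h0, hsum, h1⟩
  · refine ⟨μ₀⁻¹, inv_ne_zero h0, by rw [inv_inv, add_comm]; exact hsum, ?_⟩
    rw [norm_inv, one_le_inv_iff₀]
    exact ⟨norm_pos_iff.mpr h0, le_of_not_ge h1⟩

lemma spectrum_fin_two (p q r s x : ℂ) :
    x ∈ spectrum ℂ !![p, q; r, s] ↔ x^2 - (p+s)*x + (p*s - q*r) = 0 := by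
  have h : ((algebraMap ℂ (Matrix (Fin 2) (Fin 2) ℂ)) x - !![p,q;r,s]).det
      = x^2 - (p+s)*x + (p*s - q*r) := by
    rw [Matrix.det_fin_two]
    simp [Matrix.algebraMap_matrix_apply, Matrix.sub_apply]
    ring
  rw [spectrum.mem_iff, Matrix.isUnit_iff_isUnit_det, isUnit_iff_ne_zero, not_not, h]

lemma specRad_eq (p q r s μ : ℂ) (hdet : p * s - q * r = 1)
    (h0 : μ ≠ 0) (htr : μ + μ⁻¹ = p + s) (h1 : 1 ≤ ‖μ‖) :
    specRad !![p, q; r, s] = ‖μ‖ := by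
  have hμμ : μ * μ⁻¹ = 1 := mul_inv_cancel₀ h0
  have hspec : spectrum ℂ !![p, q; r, s] = {μ, μ⁻¹} := by
    ext x
    rw [spectrum_fin_two, hdet]
    have factor : x^2 - (p+s)*x + 1 = (x - μ) * (x - μ⁻¹) := by
      linear_combination x * htr - hμμ
    rw [factor, mul_eq_zero, sub_eq_zero, sub_eq_zero]
    simp [Set.mem_insert_iff]
  have hrad : spectralRadius ℂ !![p, q; r, s] = (‖μ‖₊ : ENNReal) ⊔ (‖μ⁻¹‖₊ : ENNReal) := by
    rw [spectralRadius, hspec]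
    exact iSup_pair
  have hle : (‖μ⁻¹‖₊ : ENNReal) ≤ (‖μ‖₊ : ENNReal) := by
    rw [ENNReal.coe_le_coe, ← NNReal.coe_le_coe]
    simp only [coe_nnnorm, norm_inv]
    calc (‖μ‖)⁻¹ ≤ 1 := inv_le_one_of_one_le₀ h1
    _ ≤ ‖μ‖ := h1
  rw [specRad, hrad, sup_eq_left.mpr hle]
  simp [coe_nnnorm]

lemma specRad_eq' (M : Matrix (Fin 2) (Fin 2) ℂ) (μ : ℂ) (hdet : M.det = 1)
    (h0 : μ ≠ 0) (htr : μ + μ⁻¹ = M.trace) (h1 : 1 ≤ ‖μ‖) :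
    specRad M = ‖μ‖ := by
  rw [Matrix.eta_fin_two M]
  apply specRad_eq _ _ _ _ _ _ h0 _ h1
  · rw [← Matrix.det_fin_two]; exact hdet
  · rw [htr, Matrix.trace_fin_two]

/-- With `G = diag(λ, λ⁻¹)`, `|λ| > 1`, `det S = det N = 1` and `b·c' ≠ 0`,
the spectral radius `r_n` of `M_n = S · G⁻ⁿ · N · Gⁿ` satisfies `r_n / |λ|^(2n) → |b·c'|`. -/
theorem specRad_conjugated_product_tendsto
    (l a b c d a' b' c' d' : ℂ) (hl : 1 < ‖l‖)
    (G S N : Matrix (Fin 2) (Fin 2) ℂ)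
    (hG : G = !![l, 0; 0, l⁻¹])
    (hS : S = !![a, b; c, d])
    (hN : N = !![a', b'; c', d'])
    (hdetS : S.det = 1) (hdetN : N.det = 1)
    (hbc : b * c' ≠ 0)
    (r : ℕ → ℝ)
    (hr : ∀ n : ℕ, r n = specRad (S * G⁻¹ ^ n * N * G ^ n)) :
    Tendsto (fun n : ℕ => r n / (‖l‖) ^ (2 * n)) atTop
      (nhds (‖b * c'‖)) := by
  have hl0 : l ≠ 0 := by
    intro h; rw [h] at hl; simp at hl; linarith
  have hGinv : G⁻¹ = !![l⁻¹, 0; 0, l] := by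
    apply Matrix.inv_eq_right_inv
    rw [hG, Matrix.mul_fin_two, Matrix.one_fin_two]
    norm_num [mul_inv_cancel₀ hl0, inv_mul_cancel₀ hl0]
  have powG : ∀ n : ℕ, G ^ n = !![l ^ n, 0; 0, (l⁻¹) ^ n] := by
    intro n
    induction n with
    | zero => simp [Matrix.one_fin_two]
    | succ k ih => rw [pow_succ, ih, hG, Matrix.mul_fin_two]; norm_num [pow_succ]
  have powGinv : ∀ n : ℕ, G⁻¹ ^ n = !![(l⁻¹) ^ n, 0; 0, l ^ n] := by
    intro n
    induction n with
    | zero => simp [Matrix.one_fin_two]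
    | succ k ih => rw [pow_succ, ih, hGinv, Matrix.mul_fin_two]; norm_num [pow_succ]
  set t : ℕ → ℂ := fun n => a*a' + d*d' + b*c'*(l^n)^2 + c*b'*((l⁻¹)^n)^2 with ht
  have huv : ∀ n : ℕ, (l⁻¹) ^ n * l ^ n = 1 := fun n => by
    rw [inv_pow]; exact inv_mul_cancel₀ (pow_ne_zero n hl0)
  have htrace : ∀ n : ℕ, (S * G⁻¹ ^ n * N * G ^ n).trace = t n := by
    intro n
    rw [hS, hN, powG n, powGinv n, Matrix.mul_fin_two, Matrix.mul_fin_two,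
      Matrix.mul_fin_two, Matrix.trace_fin_two_of, ht]
    simp only
    linear_combination (a*a' + d*d') * huv n
  have hdet : ∀ n : ℕ, (S * G⁻¹ ^ n * N * G ^ n).det = 1 := by
    intro n
    have hdG : G.det = 1 := by
      rw [hG, Matrix.det_fin_two_of]
      field_simp
      norm_num
    have hdGi : G⁻¹.det = 1 := by
      rw [hGinv, Matrix.det_fin_two_of]
      field_simp
      norm_num
    rw [Matrix.det_mul, Matrix.det_mul, Matrix.det_mul, Matrix.det_pow, Matrix.det_pow,
      hdG, hdGi, hdetS, hdetN]
    simp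
  choose μ hμ0 hμt hμ1 using fun n => exists_root_quadratic (t n)
  have hrn : ∀ n : ℕ, r n = ‖μ n‖ := by
    intro n
    rw [hr n]
    exact specRad_eq' _ _ (hdet n) (hμ0 n) ((hμt n).trans (htrace n).symm) (hμ1 n)
  have hbound : ∀ n : ℕ, |r n - ‖t n‖| ≤ 1 := by
    intro n
    have hi : ‖(μ n)⁻¹‖ ≤ 1 := by
      rw [norm_inv]; exact inv_le_one_of_one_le₀ (hμ1 n)
    have hB : ‖t n‖ ≤ ‖μ n‖ + 1 := by
      rw [← hμt n]
      exact (norm_add_le _ _).trans (by linarith)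
    have hA : ‖μ n‖ ≤ ‖t n‖ + 1 := by
      have hμeq : μ n = t n - (μ n)⁻¹ := by rw [← hμt n]; ring
      rw [hμeq, sub_eq_add_neg]
      refine (norm_add_le _ _).trans ?_
      rw [norm_neg]
      linarith
    rw [hrn n, abs_sub_le_iff]
    constructor <;> linarith
  -- analysis part
  have hL0 : (0:ℝ) < ‖l‖ := by linarith
  have hquot : Tendsto (fun n : ℕ => t n / l ^ (2*n)) atTop (nhds (b*c')) := by
    have hnorm : ‖(l⁻¹)^2‖ < 1 := by
      rw [norm_pow, norm_inv]
      exact pow_lt_one₀ (by positivity) (inv_lt_one_of_one_lt₀ hl) (by norm_num)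
    have hnorm4 : ‖(l⁻¹)^4‖ < 1 := by
      rw [norm_pow, norm_inv]
      exact pow_lt_one₀ (by positivity) (inv_lt_one_of_one_lt₀ hl) (by norm_num)
    have h1 : Tendsto (fun n : ℕ => ((l⁻¹)^2)^n) atTop (nhds 0) :=
      tendsto_pow_atTop_nhds_zero_of_norm_lt_one hnorm
    have h2 : Tendsto (fun n : ℕ => ((l⁻¹)^4)^n) atTop (nhds 0) :=
      tendsto_pow_atTop_nhds_zero_of_norm_lt_one hnorm4
    have hmain : Tendsto (fun n : ℕ =>
        (a*a'+d*d') * ((l⁻¹)^2)^n + b*c' + (c*b') * ((l⁻¹)^4)^n) atTop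
        (nhds ((a*a'+d*d') * 0 + b*c' + (c*b') * 0)) :=
      ((h1.const_mul _).add tendsto_const_nhds).add (h2.const_mul _)
    simp only [mul_zero, zero_add, add_zero] at hmain
    refine hmain.congr fun n => ?_
    have hln : (l:ℂ)^n ≠ 0 := pow_ne_zero _ hl0
    rw [ht]
    simp only
    simp only [inv_pow]
    field_simp
    ring
  have habs : ∀ n : ℕ, ‖t n‖ / (‖l‖) ^ (2*n)
      = ‖t n / l ^ (2*n)‖ := by
    intro n
    rw [norm_div, norm_pow]
  have habslim : Tendsto (fun n : ℕ => ‖t n‖ / (‖l‖) ^ (2*n)) atTop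
      (nhds (‖b*c'‖)) := by
    simp only [habs]
    exact (continuous_norm.tendsto _).comp hquot
  have hdiff : Tendsto (fun n : ℕ =>
      r n / (‖l‖) ^ (2*n) - ‖t n‖ / (‖l‖) ^ (2*n)) atTop
      (nhds 0) := by
    refine squeeze_zero_norm (a := fun n : ℕ => (((‖l‖)^2)⁻¹)^n) (fun n => ?_) ?_
    · show _ ≤ (((‖l‖)^2)⁻¹)^n
      have hpow : (0:ℝ) < (‖l‖) ^ (2*n) := by positivity
      have heq : ((((‖l‖)^2)⁻¹)^n : ℝ) = 1 / (‖l‖) ^ (2*n) := by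
        rw [inv_pow, ← pow_mul, one_div]
      rw [div_sub_div_same, Real.norm_eq_abs, abs_div, abs_of_pos hpow, heq]
      gcongr
      exact hbound n
    · apply tendsto_pow_atTop_nhds_zero_of_lt_one
      · positivity
      · apply inv_lt_one_of_one_lt₀
        nlinarith
  have := hdiff.add habslim
  simp only [zero_add] at this
  refine this.congr fun n => ?_
  ring
end

section
/- Let λ ∈ ℂ with |λ| > 1, let G = diag(λ, λ⁻¹), and let S = [[a, b], [c, d]] and N = [[a′, b′], [c′, d′]] be 2×2 complex matrices with det S = det N = 1 and b·c′ ≠ 0. For each natural number n let r_n denote the spectral radius of the matrix M_n = S · G⁻ⁿ · N · Gⁿ. Then there exists a constant C > 0 such that for all n ≥ 1 one has 2·log r_n ≥ 4·n·log|λ| − C. -/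
open Matrix

lemma specRad_key (M : Matrix (Fin 2) (Fin 2) ℂ) (hdet : M.det = 1) :
    1 ≤ specRad M ∧ ‖M.trace‖ ≤ 2 * specRad M := by
  have hdet2 : M 0 0 * M 1 1 - M 0 1 * M 1 0 = 1 := by
    rwa [Matrix.det_fin_two] at hdet
  have ht2 : M.trace = M 0 0 + M 1 1 := Matrix.trace_fin_two M
  set t := M.trace with htdef
  obtain ⟨s, hs⟩ := IsAlgClosed.exists_pow_nat_eq (t ^ 2 - 4) zero_lt_two
  set μ := (t + s) / 2 with hμ
  set ν := (t - s) / 2 with hν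
  have hμν : μ * ν = 1 := by rw [hμ, hν]; linear_combination (-1/4 : ℂ) * hs
  have hsum : μ + ν = t := by rw [hμ, hν]; ring
  have hspec : ∀ z : ℂ, z ∈ spectrum ℂ M ↔ (z - μ) * (z - ν) = 0 := by
    intro z
    rw [spectrum.mem_iff, Matrix.isUnit_iff_isUnit_det, isUnit_iff_ne_zero, not_ne_iff]
    have hmat : algebraMap ℂ (Matrix (Fin 2) (Fin 2) ℂ) z - M
        = !![z - M 0 0, -(M 0 1); -(M 1 0), z - M 1 1] := by
      ext i j
      fin_cases i <;> fin_cases j <;>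
        simp [Matrix.algebraMap_matrix_apply]
    rw [hmat, Matrix.det_fin_two_of]
    have key : (z - M 0 0) * (z - M 1 1) - -(M 0 1) * -(M 1 0) = (z - μ) * (z - ν) := by
      linear_combination hdet2 - hμν + z * hsum + z * ht2
    rw [key]
  have hμmem : μ ∈ spectrum ℂ M := (hspec μ).2 (by simp)
  have hνmem : ν ∈ spectrum ℂ M := (hspec ν).2 (by simp)
  have hub : spectralRadius ℂ M ≤ ((max ‖μ‖₊ ‖ν‖₊ : NNReal) : ENNReal) := by
    rw [spectralRadius]
    refine iSup₂_le fun k hk => ?_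
    rcases mul_eq_zero.mp ((hspec k).1 hk) with h | h
    · rw [sub_eq_zero.mp h]
      exact_mod_cast le_max_left _ _
    · rw [sub_eq_zero.mp h]
      exact_mod_cast le_max_right _ _
  have hne : spectralRadius ℂ M ≠ ⊤ := (lt_of_le_of_lt hub ENNReal.coe_lt_top).ne
  have hμle : ‖μ‖ ≤ specRad M := by
    have h1 : (‖μ‖₊ : ENNReal) ≤ spectralRadius ℂ M := by
      rw [spectralRadius]; exact le_iSup₂_of_le μ hμmem le_rfl
    simpa [specRad] using ENNReal.toReal_mono hne h1
  have hνle : ‖ν‖ ≤ specRad M := by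
    have h1 : (‖ν‖₊ : ENNReal) ≤ spectralRadius ℂ M := by
      rw [spectralRadius]; exact le_iSup₂_of_le ν hνmem le_rfl
    simpa [specRad] using ENNReal.toReal_mono hne h1
  have habs : ‖μ‖ * ‖ν‖ = 1 := by rw [← norm_mul, hμν, norm_one]
  constructor
  · nlinarith [hμle, hνle, habs, norm_nonneg μ, norm_nonneg ν]
  · have h0 : ‖t‖ = ‖μ + ν‖ := by rw [hsum]
    rw [h0]
    calc ‖μ + ν‖ ≤ ‖μ‖ + ‖ν‖ := norm_add_le _ _
      _ ≤ 2 * specRad M := by linarith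

/-- With `G = diag(λ, λ⁻¹)`, `|λ| > 1`, `det S = det N = 1` and `b·c' ≠ 0`,
the spectral radius `r_n` of `M_n = S · G⁻ⁿ · N · Gⁿ` satisfies
`2·log r_n ≥ 4·n·log|λ| − C` for all `n ≥ 1`, for some constant `C > 0`. -/
theorem specRad_conjugated_product_log_lower_bound
    (l a b c d a' b' c' d' : ℂ) (hl : 1 < ‖l‖)
    (G S N : Matrix (Fin 2) (Fin 2) ℂ)
    (hG : G = !![l, 0; 0, l⁻¹])
    (hS : S = !![a, b; c, d])
    (hN : N = !![a', b'; c', d'])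
    (hdetS : S.det = 1) (hdetN : N.det = 1)
    (hbc : b * c' ≠ 0)
    (r : ℕ → ℝ)
    (hr : ∀ n : ℕ, r n = specRad (S * G⁻¹ ^ n * N * G ^ n)) :
    ∃ C : ℝ, 0 < C ∧ ∀ n : ℕ, 1 ≤ n →
      2 * Real.log (r n) ≥ 4 * (n : ℝ) * Real.log (‖l‖) - C := by
  have hl0 : l ≠ 0 := by
    intro h
    rw [h, norm_zero] at hl
    exact absurd hl (by norm_num)
  have hGn : ∀ n : ℕ, G ^ n = !![l ^ n, 0; 0, l⁻¹ ^ n] := by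
    intro n; induction n with
    | zero => simp [Matrix.one_fin_two]
    | succ k ih =>
      rw [pow_succ, ih, hG, Matrix.mul_fin_two]
      ext i j; fin_cases i <;> fin_cases j <;> simp [pow_succ]
  have hGinv : G⁻¹ = !![l⁻¹, 0; 0, l] := by
    apply Matrix.inv_eq_right_inv
    rw [hG, Matrix.mul_fin_two, Matrix.one_fin_two]
    ext i j
    fin_cases i <;> fin_cases j <;>
      simp [mul_inv_cancel₀ hl0, inv_mul_cancel₀ hl0]
  have hGin : ∀ n : ℕ, G⁻¹ ^ n = !![l⁻¹ ^ n, 0; 0, l ^ n] := by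
    intro n; induction n with
    | zero => simp [Matrix.one_fin_two]
    | succ k ih =>
      rw [pow_succ, ih, hGinv, Matrix.mul_fin_two]
      ext i j; fin_cases i <;> fin_cases j <;> simp [pow_succ]
  have hqp : ∀ n : ℕ, l⁻¹ ^ n * l ^ n = 1 := fun n => by
    rw [← mul_pow, inv_mul_cancel₀ hl0, one_pow]
  have htr : ∀ n : ℕ, (S * G⁻¹ ^ n * N * G ^ n).trace
      = (a * a' + d * d') + b * c' * (l ^ n) ^ 2 + c * b' * (l⁻¹ ^ n) ^ 2 := by
    intro n
    rw [hS, hN, hGin n, hGn n, Matrix.mul_fin_two, Matrix.mul_fin_two, Matrix.mul_fin_two,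
      Matrix.trace_fin_two_of]
    linear_combination (a * a' + d * d') * hqp n
  have hdet1 : ∀ n : ℕ, (S * G⁻¹ ^ n * N * G ^ n).det = 1 := by
    intro n
    have hdG : G.det = 1 := by
      rw [hG, Matrix.det_fin_two_of]; field_simp; norm_num
    have hdGi : G⁻¹.det = 1 := by
      rw [hGinv, Matrix.det_fin_two_of]; field_simp; norm_num
    rw [Matrix.det_mul, Matrix.det_mul, Matrix.det_mul, Matrix.det_pow, Matrix.det_pow,
      hdG, hdGi, hdetS, hdetN]
    simp
  set A := ‖l‖ with hA
  have hApos : 0 < A := lt_trans one_pos hl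
  set β := ‖b * c'‖ with hβdef
  have hβ : 0 < β := by simpa [hβdef] using norm_pos_iff.mpr hbc
  set K := ‖a * a' + d * d'‖ + ‖c * b'‖ with hKdef
  have hK0 : 0 ≤ K := add_nonneg (norm_nonneg _) (norm_nonneg _)
  have hrge : ∀ n : ℕ, (β * (A ^ n) ^ 2 - K) / 2 ≤ r n ∧ 1 ≤ r n := by
    intro n
    obtain ⟨h1, h2⟩ := specRad_key _ (hdet1 n)
    rw [← hr n] at h1 h2
    refine ⟨?_, h1⟩
    have htrabs : β * (A ^ n) ^ 2 - K ≤ ‖(S * G⁻¹ ^ n * N * G ^ n).trace‖ := by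
      rw [htr n]
      have e1 : ‖b * c' * (l ^ n) ^ 2‖ = β * (A ^ n) ^ 2 := by
        rw [norm_mul, norm_pow, norm_pow]
      have e2 : ‖c * b' * (l⁻¹ ^ n) ^ 2‖ ≤ ‖c * b'‖ := by
        rw [norm_mul]
        have hw : ‖(l⁻¹ ^ n) ^ 2‖ ≤ 1 := by
          rw [norm_pow, norm_pow, norm_inv]
          apply pow_le_one₀ (by positivity)
          apply pow_le_one₀ (by positivity)
          rw [inv_le_one_iff₀]
          right; exact le_of_lt hl
        nlinarith [norm_nonneg (c * b'), norm_nonneg ((l⁻¹ ^ n) ^ 2)]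
      have tri : ‖b * c' * (l ^ n) ^ 2‖
          - ‖a * a' + d * d'‖ - ‖c * b' * (l⁻¹ ^ n) ^ 2‖
          ≤ ‖(a * a' + d * d') + b * c' * (l ^ n) ^ 2 + c * b' * (l⁻¹ ^ n) ^ 2‖ := by
        set X := a * a' + d * d'
        set Y := b * c' * (l ^ n) ^ 2
        set Z := c * b' * (l⁻¹ ^ n) ^ 2
        have h3 : ‖Y‖ = ‖(X + Y + Z) + (-X + -Z)‖ := by ring_nf
        have h4 : ‖(X + Y + Z) + (-X + -Z)‖
            ≤ ‖X + Y + Z‖ + (‖X‖ + ‖Z‖) := by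
          calc ‖(X + Y + Z) + (-X + -Z)‖
              ≤ ‖X + Y + Z‖ + ‖-X + -Z‖ := norm_add_le _ _
            _ ≤ ‖X + Y + Z‖ + (‖X‖ + ‖Z‖) := by
                have := norm_add_le (-X) (-Z)
                simp only [norm_neg] at this
                linarith
        linarith [h3 ▸ h4]
      rw [e1] at tri
      have : ‖a * a' + d * d'‖ + ‖c * b' * (l⁻¹ ^ n) ^ 2‖ ≤ K := by
        rw [hKdef]; linarith [e2]
      linarith
    linarith
  set T := (2 + 2 * K) / β with hT
  have hTpos : 0 < T := div_pos (by linarith) hβ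
  set ε := min (β / 4) (1 / (2 * T)) with hε
  have hεpos : 0 < ε := lt_min (by linarith) (by positivity)
  have hclaim : ∀ n : ℕ, ε * (A ^ n) ^ 2 ≤ r n := by
    intro n
    obtain ⟨h1, h2⟩ := hrge n
    by_cases hcase : 2 * T ≤ (A ^ n) ^ 2
    · have hεle : ε ≤ β / 4 := min_le_left _ _
      have hTβ : β * T = 2 + 2 * K := by
        rw [hT]; field_simp
      nlinarith [sq_nonneg (A ^ n)]
    · push_neg at hcase
      have hεle : ε ≤ 1 / (2 * T) := min_le_right _ _
      have hApow : 0 ≤ (A ^ n) ^ 2 := sq_nonneg _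
      have : ε * (A ^ n) ^ 2 ≤ (1 / (2 * T)) * (2 * T) := by
        apply mul_le_mul hεle (le_of_lt hcase) hApow (by positivity)
      rw [one_div_mul_cancel (by positivity)] at this
      linarith
  refine ⟨max 1 (-(2 * Real.log ε)), lt_of_lt_of_le one_pos (le_max_left _ _), ?_⟩
  intro n hn
  have hrpos : 0 < r n := lt_of_lt_of_le one_pos (hrge n).2
  have hlog : Real.log (ε * (A ^ n) ^ 2) ≤ Real.log (r n) :=
    Real.log_le_log (by positivity) (hclaim n)
  have hexp : Real.log (ε * (A ^ n) ^ 2) = Real.log ε + 2 * (n : ℝ) * Real.log A := by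
    rw [Real.log_mul (ne_of_gt hεpos) (by positivity), Real.log_pow, Real.log_pow]
    push_cast; ring
  have hC : -(2 * Real.log ε) ≤ max 1 (-(2 * Real.log ε)) := le_max_right _ _
  rw [ge_iff_le]
  calc 4 * (n : ℝ) * Real.log A - max 1 (-(2 * Real.log ε))
      ≤ 4 * (n : ℝ) * Real.log A + 2 * Real.log ε := by linarith
    _ = 2 * (Real.log ε + 2 * (n : ℝ) * Real.log A) := by ring
    _ = 2 * Real.log (ε * (A ^ n) ^ 2) := by rw [hexp]
    _ ≤ 2 * Real.log (r n) := by linarith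
end

section
/- Let λ ∈ ℂ with |λ| > 1, let G = diag(λ, λ⁻¹), and let N = [[a′, b′], [c′, d′]] be a 2×2 complex matrix with det N = 1 and a′ ≠ 0. For each natural number n let r_n denote the spectral radius of the matrix N · Gⁿ. Then r_n / |λ|ⁿ converges to |a′| as n → ∞; consequently there exists a constant C > 0 such that for all n ≥ 1 one has 2·log r_n ≥ 2·n·log|λ| − C. -/
open Matrix Filter

lemma mem_spec_iff' (M : Matrix (Fin 2) (Fin 2) ℂ) (μ : ℂ) :
    μ ∈ spectrum ℂ M ↔ μ ^ 2 - M.trace * μ + M.det = 0 := by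
  rw [spectrum.mem_iff, Matrix.isUnit_iff_isUnit_det, isUnit_iff_ne_zero, not_not]
  constructor <;> intro h
  · rw [← h]
    simp [Matrix.det_fin_two, Matrix.trace_fin_two, Matrix.algebraMap_matrix_apply,
      Matrix.sub_apply]
    ring
  · rw [← h]
    simp [Matrix.det_fin_two, Matrix.trace_fin_two, Matrix.algebraMap_matrix_apply,
      Matrix.sub_apply]
    ring

lemma specRad_of_pair (M : Matrix (Fin 2) (Fin 2) ℂ) (μ₁ μ₂ : ℂ)
    (h : spectrum ℂ M = {μ₁, μ₂}) :
    specRad M = max (‖μ₁‖) (‖μ₂‖) := by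
  unfold specRad spectralRadius
  rw [h, iSup_insert, iSup_singleton, ← ENNReal.coe_max, ENNReal.coe_toReal]
  rw [NNReal.coe_max]
  simp [coe_nnnorm]

lemma specRad_bounds (M : Matrix (Fin 2) (Fin 2) ℂ) (hdet : M.det = 1) :
    1 ≤ specRad M ∧ ‖M.trace‖ - 1 ≤ specRad M ∧
      specRad M ≤ ‖M.trace‖ + 1 := by
  set t : ℂ := M.trace with ht
  obtain ⟨s, hs⟩ := IsAlgClosed.exists_pow_nat_eq (k := ℂ) (t ^ 2 - 4) (n := 2) (by norm_num)
  set μ₁ : ℂ := (t + s) / 2 with hμ₁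
  set μ₂ : ℂ := (t - s) / 2 with hμ₂
  have hsum : μ₁ + μ₂ = t := by rw [hμ₁, hμ₂]; ring
  have hprod : μ₁ * μ₂ = 1 := by
    rw [hμ₁, hμ₂]
    field_simp
    linear_combination -hs
  have hspec : spectrum ℂ M = {μ₁, μ₂} := by
    ext μ
    rw [mem_spec_iff' M μ, hdet, ← ht]
    simp only [Set.mem_insert_iff, Set.mem_singleton_iff]
    constructor
    · intro h
      have h2 : (μ - μ₁) * (μ - μ₂) = 0 := by linear_combination h + μ * hsum - hprod - (1/2 : ℂ) * hs
      rcases mul_eq_zero.1 h2 with h' | h'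
      · exact Or.inl (sub_eq_zero.1 h')
      · exact Or.inr (sub_eq_zero.1 h')
    · rintro (h' | h') <;> rw [h']
      · linear_combination μ₁ * hsum - hprod
      · linear_combination μ₂ * hsum - hprod
  have hrad := specRad_of_pair M μ₁ μ₂ hspec
  set a := ‖μ₁‖ with hadef
  set b := ‖μ₂‖ with hbdef
  have hab : a * b = 1 := by rw [hadef, hbdef, ← norm_mul, hprod, norm_one]
  have ha0 : 0 ≤ a := norm_nonneg _
  have hb0 : 0 ≤ b := norm_nonneg _
  have hmax1 : 1 ≤ max a b := by
    by_contra h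
    push_neg at h
    nlinarith [le_max_left a b, le_max_right a b]
  have hmin : min a b ≤ 1 := by
    by_contra h
    push_neg at h
    nlinarith [min_le_left a b, min_le_right a b]
  have htle : ‖t‖ ≤ a + b := by
    rw [← hsum]; exact norm_add_le _ _
  have habsum : a + b ≤ max a b + 1 := by
    rcases max_cases a b with ⟨h1, h2⟩ | ⟨h1, h2⟩ <;>
      rcases min_cases a b with ⟨m1, m2⟩ | ⟨m1, m2⟩ <;> linarith
  have hdiff : |a - b| ≤ ‖t‖ := by
    have := abs_norm_sub_norm_le μ₁ (-μ₂)
    simp only [norm_neg, sub_neg_eq_add, hsum] at this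
    simpa [← hadef, ← hbdef] using this
  have htge : max a b - 1 ≤ ‖t‖ := by
    rcases max_cases a b with ⟨h1, h2⟩ | ⟨h1, h2⟩ <;>
      rcases abs_cases (a - b) with ⟨e1, e2⟩ | ⟨e1, e2⟩ <;>
      rcases min_cases a b with ⟨m1, m2⟩ | ⟨m1, m2⟩ <;> linarith
  refine ⟨hrad ▸ hmax1, ?_, ?_⟩ <;> rw [hrad] <;> linarith

/-- With `G = diag(λ, λ⁻¹)`, `|λ| > 1`, `det N = 1` and `a' ≠ 0`,
the spectral radius `r_n` of `N · Gⁿ` satisfies `r_n / |λ|ⁿ → |a'|`; consequently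
there is `C > 0` with `2·log r_n ≥ 2·n·log|λ| − C` for all `n ≥ 1`. -/
theorem specRad_mul_pow_tendsto_and_log_lower_bound
    (l a' b' c' d' : ℂ) (hl : 1 < ‖l‖)
    (G N : Matrix (Fin 2) (Fin 2) ℂ)
    (hG : G = !![l, 0; 0, l⁻¹])
    (hN : N = !![a', b'; c', d'])
    (hdetN : N.det = 1)
    (ha' : a' ≠ 0)
    (r : ℕ → ℝ)
    (hr : ∀ n : ℕ, r n = specRad (N * G ^ n)) :
    Tendsto (fun n : ℕ => r n / ‖l‖ ^ n) atTop (nhds ‖a'‖) ∧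
    ∃ C : ℝ, 0 < C ∧ ∀ n : ℕ, 1 ≤ n →
      2 * Real.log (r n) ≥ 2 * (n : ℝ) * Real.log ‖l‖ - C := by
  have hl0 : l ≠ 0 := by
    intro h; rw [h] at hl; simp at hl; linarith
  have hGpow : ∀ n : ℕ, G ^ n = !![l ^ n, 0; 0, (l⁻¹) ^ n] := by
    intro n
    induction n with
    | zero => simp [Matrix.one_fin_two]
    | succ k ih =>
      rw [pow_succ, ih, hG, Matrix.mul_fin_two]
      simp [pow_succ]
  have hprodM : ∀ n : ℕ, N * G ^ n = !![a' * l ^ n, b' * (l⁻¹) ^ n;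
      c' * l ^ n, d' * (l⁻¹) ^ n] := by
    intro n
    rw [hGpow n, hN, Matrix.mul_fin_two]
    congr 1 <;> ring_nf
  set t : ℕ → ℂ := fun n => a' * l ^ n + d' * (l⁻¹) ^ n with htdef
  have htrace : ∀ n : ℕ, (N * G ^ n).trace = t n := by
    intro n; rw [hprodM n]; simp [Matrix.trace_fin_two, inv_pow, htdef]
  have hdet : ∀ n : ℕ, (N * G ^ n).det = 1 := by
    intro n
    rw [Matrix.det_mul, hdetN, one_mul, Matrix.det_pow, hG, Matrix.det_fin_two_of,
      mul_inv_cancel₀ hl0]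
    simp
  have hbounds := fun n => specRad_bounds (N * G ^ n) (hdet n)
  have hrb : ∀ n : ℕ, 1 ≤ r n ∧ ‖t n‖ - 1 ≤ r n ∧
      r n ≤ ‖t n‖ + 1 := by
    intro n
    rw [hr n]
    have := hbounds n
    rw [htrace n] at this
    exact this
  have hln : ∀ n : ℕ, (0:ℝ) < (‖l‖) ^ n :=
    fun n => pow_pos (by linarith) n
  -- the quotient of the trace
  set w : ℂ := l⁻¹ * l⁻¹ with hwdef
  have hw1 : ‖w‖ < 1 := by
    rw [hwdef]
    have h1 : ‖l⁻¹‖ < 1 := by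
      rw [norm_inv]
      exact inv_lt_one_of_one_lt₀ hl
    calc ‖l⁻¹ * l⁻¹‖ = ‖l⁻¹‖ * ‖l⁻¹‖ := by
          exact norm_mul _ _
      _ < 1 := by nlinarith [norm_nonneg l⁻¹]
  have hwt : Tendsto (fun n : ℕ => w ^ n) atTop (nhds 0) :=
    tendsto_pow_atTop_nhds_zero_of_norm_lt_one hw1
  have hTq : ∀ n : ℕ, ‖t n‖ / (‖l‖) ^ n
      = ‖a' + d' * w ^ n‖ := by
    intro n
    have h5 : t n = (a' + d' * w ^ n) * l ^ n := by
      simp only [htdef, hwdef]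
      rw [add_mul, mul_assoc, ← mul_pow, mul_assoc, inv_mul_cancel₀ hl0, mul_one]
    rw [h5, norm_mul, norm_pow]
    field_simp
  have hcont : Tendsto (fun n : ℕ => ‖a' + d' * w ^ n‖) atTop
      (nhds (‖a'‖)) := by
    have hc : Continuous fun z : ℂ => ‖a' + d' * z‖ :=
      continuous_norm.comp (continuous_const.add (continuous_const.mul continuous_id))
    have := (hc.tendsto 0).comp hwt
    simpa [Function.comp_def] using this
  have htendT : Tendsto (fun n : ℕ => ‖t n‖ / (‖l‖) ^ n) atTop
      (nhds (‖a'‖)) := by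
    simpa only [hTq] using hcont
  have herr : Tendsto (fun n : ℕ => (r n - ‖t n‖) / (‖l‖) ^ n) atTop
      (nhds 0) := by
    refine squeeze_zero_norm (fun n => ?_) (tendsto_pow_atTop_nhds_zero_of_lt_one
      (by positivity) (inv_lt_one_of_one_lt₀ hl) : Tendsto (fun n : ℕ => ((‖l‖)⁻¹) ^ n) atTop (nhds 0))
    · 
      rw [norm_div, norm_pow, Real.norm_eq_abs (‖l‖), abs_of_pos (by linarith),
        inv_pow, div_eq_mul_inv]
      have h3 : |r n - ‖t n‖| ≤ 1 := by
        rw [abs_le]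
        constructor <;> [linarith [(hrb n).2.1]; linarith [(hrb n).2.2]]
      calc ‖r n - ‖t n‖‖ * ((‖l‖) ^ n)⁻¹
          ≤ 1 * ((‖l‖) ^ n)⁻¹ := by
            apply mul_le_mul_of_nonneg_right _ (by positivity)
            exact h3
        _ = ((‖l‖) ^ n)⁻¹ := one_mul _
  have htend : Tendsto (fun n : ℕ => r n / (‖l‖) ^ n) atTop
      (nhds (‖a'‖)) := by
    have := htendT.add herr
    simp only [add_zero] at this
    convert this using 2 with n
    rw [← add_div]
    ring_nf
  refine ⟨htend, ?_⟩
  have ha0 : 0 < ‖a'‖ := by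
    simpa [norm_pos_iff] using ha'
  have hev : ∀ᶠ n in atTop, ‖a'‖ / 2 < r n / (‖l‖) ^ n :=
    htend.eventually (eventually_gt_nhds (by linarith))
  obtain ⟨Nb, hNb⟩ := eventually_atTop.1 hev
  have hlogl : 0 ≤ Real.log (‖l‖) := Real.log_nonneg (by linarith)
  set C : ℝ := max (2 * Nb * Real.log (‖l‖))
      (2 * |Real.log (‖a'‖ / 2)|) + 1 with hCdef
  have hC0 : 0 < C := by
    have : (0:ℝ) ≤ 2 * Nb * Real.log (‖l‖) := by positivity
    have := le_max_left (2 * Nb * Real.log (‖l‖))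
      (2 * |Real.log (‖a'‖ / 2)|)
    rw [hCdef]; linarith
  refine ⟨C, hC0, fun n hn => ?_⟩
  rcases lt_or_ge n Nb with hcase | hcase
  · have hlog0 : 0 ≤ Real.log (r n) := Real.log_nonneg (hrb n).1
    have h1 : 2 * (n:ℝ) * Real.log (‖l‖) ≤ 2 * Nb * Real.log (‖l‖) := by
      have : (n:ℝ) ≤ Nb := by exact_mod_cast hcase.le
      nlinarith
    have h2 := le_max_left (2 * Nb * Real.log (‖l‖))
      (2 * |Real.log (‖a'‖ / 2)|)
    rw [ge_iff_le, hCdef]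
    linarith
  · have hrn : ‖a'‖ / 2 * (‖l‖) ^ n < r n := by
      have := hNb n hcase
      rw [lt_div_iff₀ (hln n)] at this
      linarith
    have hpos : 0 < ‖a'‖ / 2 * (‖l‖) ^ n := by positivity
    have hlog : Real.log (‖a'‖ / 2 * (‖l‖) ^ n) ≤ Real.log (r n) :=
      Real.log_le_log hpos hrn.le
    rw [Real.log_mul (by positivity) (by positivity), Real.log_pow] at hlog
    have h2 := le_max_right (2 * Nb * Real.log (‖l‖))
      (2 * |Real.log (‖a'‖ / 2)|)
    have h3 : -|Real.log (‖a'‖ / 2)| ≤ Real.log (‖a'‖ / 2) :=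
      neg_abs_le _
    rw [ge_iff_le, hCdef]
    linarith
end

section
/- Let V be a real vector space of finite dimension m, let W be a real inner product space, let T : V → W be a linear map, and let C ≥ 1 be a real constant. Let q and q′ be symmetric positive-definite bilinear forms on V such that q(v,v)/C ≤ q′(v,v) ≤ C·q(v,v) for all v ∈ V. Then for every basis (e₁, …, e_m) of V with q(eᵢ, eⱼ) = δᵢⱼ and every basis (f₁, …, f_m) of V with q′(fᵢ, fⱼ) = δᵢⱼ, one has (1/C)·Σⱼ ‖T fⱼ‖² ≤ Σᵢ ‖T eᵢ‖² ≤ C·Σⱼ ‖T fⱼ‖². -/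
open scoped RealInnerProductSpace

open scoped MatrixOrder

lemma psd_inner_sum_nonneg {m : ℕ} {W : Type*} [NormedAddCommGroup W]
    [InnerProductSpace ℝ W] {M : Matrix (Fin m) (Fin m) ℝ} (hM : M.PosSemidef)
    (w : Fin m → W) :
    0 ≤ ∑ j : Fin m, ∑ k : Fin m, M j k * ⟪w j, w k⟫ := by
  set S := CFC.sqrt M with hSdef
  have hS : S * S = M := CFC.sqrt_mul_sqrt_self M hM.nonneg
  have hHerm : S.IsHermitian := (Matrix.nonneg_iff_posSemidef.mp (CFC.sqrt_nonneg M)).1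
  have hsym : ∀ j k, S j k = S k j := by
    intro j k
    have := hHerm.apply j k
    simpa using this.symm
  have key : ∑ j : Fin m, ∑ k : Fin m, M j k * ⟪w j, w k⟫
      = ∑ s : Fin m, ‖∑ j : Fin m, S s j • w j‖ ^ 2 := by
    have : ∀ s : Fin m, ‖∑ j : Fin m, S s j • w j‖ ^ 2
        = ∑ j : Fin m, ∑ k : Fin m, S s j * S s k * ⟪w j, w k⟫ := by
      intro s
      rw [← real_inner_self_eq_norm_sq, sum_inner]
      refine Finset.sum_congr rfl fun j _ => ?_
      rw [real_inner_smul_left, inner_sum, Finset.mul_sum]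
      refine Finset.sum_congr rfl fun k _ => ?_
      rw [real_inner_smul_right]; ring
    simp_rw [this]
    calc ∑ j : Fin m, ∑ k : Fin m, M j k * ⟪w j, w k⟫
        = ∑ j : Fin m, ∑ k : Fin m, ∑ s : Fin m, S s j * S s k * ⟪w j, w k⟫ := by
          refine Finset.sum_congr rfl fun j _ => Finset.sum_congr rfl fun k _ => ?_
          rw [← hS, Matrix.mul_apply, Finset.sum_mul]
          exact Finset.sum_congr rfl fun s _ => by rw [hsym j s]
      _ = ∑ j : Fin m, ∑ s : Fin m, ∑ k : Fin m, S s j * S s k * ⟪w j, w k⟫ := by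
          exact Finset.sum_congr rfl fun j _ => Finset.sum_comm
      _ = ∑ s : Fin m, ∑ j : Fin m, ∑ k : Fin m, S s j * S s k * ⟪w j, w k⟫ :=
          Finset.sum_comm
  rw [key]
  exact Finset.sum_nonneg fun s _ => sq_nonneg _

private lemma sum_mul_ite_r {m : ℕ} (x : Fin m → ℝ) (j : Fin m) :
    (∑ k : Fin m, x k * if k = j then (1:ℝ) else 0) = x j := by
  rw [Finset.sum_eq_single j (fun k _ hk => by simp [hk]) (by simp)]; simp

private lemma sum_mul_ite_l {m : ℕ} (x : Fin m → ℝ) (j : Fin m) :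
    (∑ k : Fin m, x k * if j = k then (1:ℝ) else 0) = x j := by
  rw [Finset.sum_eq_single j (fun k _ hk => by simp [Ne.symm hk]) (by simp)]; simp

lemma energy_one_sided
    {V : Type*} [AddCommGroup V] [Module ℝ V]
    {W : Type*} [NormedAddCommGroup W] [InnerProductSpace ℝ W]
    (m : ℕ) (T : V →ₗ[ℝ] W) (C : ℝ) (hCpos : 0 < C)
    (q q' : V →ₗ[ℝ] V →ₗ[ℝ] ℝ)
    (hq'symm : ∀ v w : V, q' v w = q' w v)
    (hq'nonneg : ∀ v : V, 0 ≤ q' v v)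
    (hbound : ∀ v : V, q' v v ≤ C * q v v)
    (e : Module.Basis (Fin m) ℝ V) (f : Module.Basis (Fin m) ℝ V)
    (he : ∀ i j : Fin m, q (e i) (e j) = if i = j then 1 else 0)
    (hf : ∀ i j : Fin m, q' (f i) (f j) = if i = j then 1 else 0) :
    ∑ i : Fin m, ‖T (e i)‖ ^ 2 ≤ C * ∑ j : Fin m, ‖T (f j)‖ ^ 2 := by
  set a : Fin m → Fin m → ℝ := fun i j => q' (e i) (f j) with ha
  -- every vector expands in the q'-orthonormal basis f with coefficients q' v (f j)
  have hrepr : ∀ v : V, v = ∑ j : Fin m, q' v (f j) • f j := by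
    intro v
    have hcoef : ∀ k : Fin m, q' v (f k) = f.repr v k := by
      intro k
      conv_lhs => rw [← f.sum_repr v]
      simp only [map_sum, LinearMap.sum_apply, map_smul, LinearMap.smul_apply,
        smul_eq_mul, hf]
      simp
    conv_lhs => rw [← f.sum_repr v]
    exact Finset.sum_congr rfl fun j _ => by rw [hcoef]
  have hTe : ∀ i : Fin m, T (e i) = ∑ j : Fin m, a i j • T (f j) := by
    intro i
    conv_lhs => rw [hrepr (e i)]
    simp [map_sum, map_smul, ha]
  -- the Gram-type matrix
  set G : Matrix (Fin m) (Fin m) ℝ := fun j k => ∑ i : Fin m, a i j * a i k with hG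
  have hE : ∑ i : Fin m, ‖T (e i)‖ ^ 2
      = ∑ j : Fin m, ∑ k : Fin m, G j k * ⟪T (f j), T (f k)⟫ := by
    have h1 : ∀ i : Fin m, ‖T (e i)‖ ^ 2
        = ∑ j : Fin m, ∑ k : Fin m, a i j * a i k * ⟪T (f j), T (f k)⟫ := by
      intro i
      rw [← real_inner_self_eq_norm_sq, hTe i, sum_inner]
      refine Finset.sum_congr rfl fun j _ => ?_
      rw [real_inner_smul_left, inner_sum, Finset.mul_sum]
      refine Finset.sum_congr rfl fun k _ => ?_
      rw [real_inner_smul_right]; ring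
    simp_rw [h1]
    rw [Finset.sum_comm]
    refine Finset.sum_congr rfl fun j _ => ?_
    rw [Finset.sum_comm]
    refine Finset.sum_congr rfl fun k _ => ?_
    rw [hG, Finset.sum_mul]
  -- key quadratic form inequality
  have hkey : ∀ x : Fin m → ℝ,
      ∑ i : Fin m, (∑ j : Fin m, x j * a i j) ^ 2 ≤ C * ∑ j : Fin m, (x j) ^ 2 := by
    intro x
    set v : V := ∑ j : Fin m, x j • f j with hv
    have hvj : ∀ i : Fin m, ∑ j : Fin m, x j * a i j = q' (e i) v := by
      intro i
      rw [hv, map_sum]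
      refine Finset.sum_congr rfl fun j _ => ?_
      rw [map_smul, smul_eq_mul]
    have hq'vv : q' v v = ∑ j : Fin m, (x j) ^ 2 := by
      rw [hv]
      simp only [map_sum, LinearMap.sum_apply, map_smul, LinearMap.smul_apply,
        smul_eq_mul, hf]
      refine Finset.sum_congr rfl fun j _ => ?_
      first
      | rw [sum_mul_ite_r x j, sq]
      | rw [sum_mul_ite_l x j, sq]
      | (rw [show ∀ y, x j * y = x j * y from fun _ => rfl]
         first
         | rw [sum_mul_ite_r x j, sq]
         | rw [sum_mul_ite_l x j, sq])
    set c : Fin m → ℝ := fun i => q' (e i) v with hc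
    set u : V := ∑ i : Fin m, c i • e i with hu
    set Sv : ℝ := ∑ i : Fin m, (c i) ^ 2 with hSv
    have hquu : q u u = Sv := by
      rw [hu]
      simp only [map_sum, LinearMap.sum_apply, map_smul, LinearMap.smul_apply,
        smul_eq_mul, he]
      rw [hSv]
      refine Finset.sum_congr rfl fun i _ => ?_
      first
      | rw [sum_mul_ite_r c i, sq]
      | rw [sum_mul_ite_l c i, sq]
    have hq'vu : q' v u = Sv := by
      rw [hu, map_sum, hSv]
      refine Finset.sum_congr rfl fun i _ => ?_
      rw [map_smul, smul_eq_mul, hq'symm v (e i)]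
      have hci : q' (e i) v = c i := rfl
      rw [hci, sq]
    have hq'uv : q' u v = Sv := by rw [hq'symm u v, hq'vu]
    have hpos : 0 ≤ q' (C • v - u) (C • v - u) := hq'nonneg _
    have hexp : q' (C • v - u) (C • v - u)
        = C ^ 2 * q' v v - 2 * C * Sv + q' u u := by
      simp only [map_sub, map_smul, LinearMap.sub_apply, LinearMap.smul_apply,
        smul_eq_mul]
      rw [hq'vu, hq'uv]; ring
    have huu : q' u u ≤ C * Sv := by
      calc q' u u ≤ C * q u u := hbound u
        _ = C * Sv := by rw [hquu]
    have hfin : Sv ≤ C * q' v v := by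
      nlinarith [hpos, hexp, huu]
    calc ∑ i : Fin m, (∑ j : Fin m, x j * a i j) ^ 2
        = Sv := by rw [hSv]; exact Finset.sum_congr rfl fun i _ => by rw [hvj i, hc]
      _ ≤ C * q' v v := hfin
      _ = C * ∑ j : Fin m, (x j) ^ 2 := by rw [hq'vv]
  -- M = C·I - G is positive semidefinite
  set M : Matrix (Fin m) (Fin m) ℝ :=
    fun j k => (if j = k then C else 0) - G j k with hM
  have hGsymm : ∀ j k, G j k = G k j := by
    intro j k
    exact Finset.sum_congr rfl fun i _ => mul_comm _ _
  have hMpsd : M.PosSemidef := by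
    refine Matrix.PosSemidef.of_dotProduct_mulVec_nonneg ?_ ?_
    · ext j k
      rw [Matrix.conjTranspose_apply]
      simp only [Matrix.conjTranspose_apply, hM, star_trivial]
      rw [hGsymm k j]
      congr 1
      simp [eq_comm]
    · intro x
      have hdot : dotProduct (star x) (M.mulVec x)
          = ∑ j : Fin m, ∑ k : Fin m, x j * M j k * x k := by
        simp only [dotProduct, Matrix.mulVec, Pi.star_apply, star_trivial,
          Finset.mul_sum]
        exact Finset.sum_congr rfl fun j _ => Finset.sum_congr rfl fun k _ => by ring
      have hMe : ∀ j k, x j * M j k * x k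
          = x j * (if j = k then C else 0) * x k - x j * G j k * x k := by
        intro j k; rw [hM]; ring
      have hdiag : ∑ j : Fin m, ∑ k : Fin m, x j * (if j = k then C else 0) * x k
          = C * ∑ j : Fin m, (x j) ^ 2 := by
        rw [Finset.mul_sum]
        refine Finset.sum_congr rfl fun j _ => ?_
        rw [Finset.sum_eq_single j (fun k _ hk => by simp [Ne.symm hk]) (by simp)]
        simp [sq]; ring
      have hGpart : ∑ j : Fin m, ∑ k : Fin m, x j * G j k * x k
          = ∑ i : Fin m, (∑ j : Fin m, x j * a i j) ^ 2 := by
        have expand : ∀ j k : Fin m, x j * G j k * x k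
            = ∑ i : Fin m, (x j * a i j) * (x k * a i k) := by
          intro j k
          rw [hG]
          simp only
          rw [Finset.mul_sum, Finset.sum_mul]
          exact Finset.sum_congr rfl fun i _ => by ring
        simp_rw [expand]
        calc ∑ j : Fin m, ∑ k : Fin m, ∑ i : Fin m, (x j * a i j) * (x k * a i k)
            = ∑ j : Fin m, ∑ i : Fin m, ∑ k : Fin m, (x j * a i j) * (x k * a i k) :=
              Finset.sum_congr rfl fun j _ => Finset.sum_comm
          _ = ∑ i : Fin m, ∑ j : Fin m, ∑ k : Fin m, (x j * a i j) * (x k * a i k) :=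
              Finset.sum_comm
          _ = ∑ i : Fin m, (∑ j : Fin m, x j * a i j) ^ 2 := by
              refine Finset.sum_congr rfl fun i _ => ?_
              rw [sq, Finset.sum_mul_sum]
      rw [hdot]
      simp_rw [hMe]
      simp_rw [Finset.sum_sub_distrib]
      rw [hdiag, hGpart]
      linarith [hkey x]
  -- conclude
  have h0 := psd_inner_sum_nonneg hMpsd (fun j => T (f j))
  have hsplit : ∑ j : Fin m, ∑ k : Fin m, M j k * ⟪T (f j), T (f k)⟫
      = C * ∑ j : Fin m, ‖T (f j)‖ ^ 2
        - ∑ j : Fin m, ∑ k : Fin m, G j k * ⟪T (f j), T (f k)⟫ := by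
    have hMsplit : ∀ j k : Fin m, M j k * ⟪T (f j), T (f k)⟫
        = (if j = k then C else 0) * ⟪T (f j), T (f k)⟫
          - G j k * ⟪T (f j), T (f k)⟫ := by
      intro j k; rw [hM]; ring
    simp_rw [hMsplit]
    simp_rw [Finset.sum_sub_distrib]
    congr 1
    rw [Finset.mul_sum]
    refine Finset.sum_congr rfl fun j _ => ?_
    rw [Finset.sum_eq_single j (fun k _ hk => by simp [Ne.symm hk]) (by simp)]
    rw [if_pos rfl, real_inner_self_eq_norm_sq]
  rw [hE]
  rw [hsplit] at h0
  linarith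

/-- Comparison of energy densities with respect to bi-Lipschitz equivalent
scalar products. If `q, q'` are symmetric positive-definite bilinear forms on an
`m`-dimensional real vector space `V` with `q(v,v)/C ≤ q'(v,v) ≤ C·q(v,v)`, `T : V → W`
is linear into a real inner product space, `(eᵢ)` is a `q`-orthonormal basis and `(fⱼ)`
a `q'`-orthonormal basis, then `(1/C)·Σ‖T fⱼ‖² ≤ Σ‖T eᵢ‖² ≤ C·Σ‖T fⱼ‖²`. -/
theorem energy_density_comparison
    {V : Type*} [AddCommGroup V] [Module ℝ V] [FiniteDimensional ℝ V]
    {W : Type*} [NormedAddCommGroup W] [InnerProductSpace ℝ W]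
    (m : ℕ) (hdim : Module.finrank ℝ V = m)
    (T : V →ₗ[ℝ] W) (C : ℝ) (hC : 1 ≤ C)
    (q q' : V →ₗ[ℝ] V →ₗ[ℝ] ℝ)
    (hqsymm : ∀ v w : V, q v w = q w v)
    (hq'symm : ∀ v w : V, q' v w = q' w v)
    (hqpos : ∀ v : V, v ≠ 0 → 0 < q v v)
    (hq'pos : ∀ v : V, v ≠ 0 → 0 < q' v v)
    (hcomp : ∀ v : V, q v v / C ≤ q' v v ∧ q' v v ≤ C * q v v)
    (e : Module.Basis (Fin m) ℝ V)
    (he : ∀ i j : Fin m, q (e i) (e j) = if i = j then 1 else 0)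
    (f : Module.Basis (Fin m) ℝ V)
    (hf : ∀ i j : Fin m, q' (f i) (f j) = if i = j then 1 else 0) :
    (1 / C) * ∑ j : Fin m, ‖T (f j)‖ ^ 2 ≤ ∑ i : Fin m, ‖T (e i)‖ ^ 2 ∧
      ∑ i : Fin m, ‖T (e i)‖ ^ 2 ≤ C * ∑ j : Fin m, ‖T (f j)‖ ^ 2 := by
  have hCpos : 0 < C := lt_of_lt_of_le one_pos hC
  have hqnn : ∀ v : V, 0 ≤ q v v := by
    intro v
    by_cases h : v = 0
    · simp [h]
    · exact (hqpos v h).le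
  have hq'nn : ∀ v : V, 0 ≤ q' v v := by
    intro v
    by_cases h : v = 0
    · simp [h]
    · exact (hq'pos v h).le
  have h1 : ∑ i : Fin m, ‖T (e i)‖ ^ 2 ≤ C * ∑ j : Fin m, ‖T (f j)‖ ^ 2 :=
    energy_one_sided m T C hCpos q q' hq'symm hq'nn (fun v => (hcomp v).2) e f he hf
  have h2 : ∑ j : Fin m, ‖T (f j)‖ ^ 2 ≤ C * ∑ i : Fin m, ‖T (e i)‖ ^ 2 := by
    refine energy_one_sided m T C hCpos q' q hqsymm hqnn (fun v => ?_) f e hf he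
    have := (hcomp v).1
    have h' : q v v ≤ q' v v * C := (div_le_iff₀ hCpos).mp this
    linarith
  refine ⟨?_, h1⟩
  rw [div_mul_eq_mul_div, one_mul, div_le_iff₀ hCpos]
  calc ∑ j : Fin m, ‖T (f j)‖ ^ 2 ≤ C * ∑ i : Fin m, ‖T (e i)‖ ^ 2 := h2
    _ = (∑ i : Fin m, ‖T (e i)‖ ^ 2) * C := mul_comm _ _
end
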